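/- Let W = [[a,b],[c,d]] ∈ SL(2,ℂ) satisfy c = a + d − 2 and Re(a + d) ≤ −2, and let X = [[1,1],[0,1]]. Then the subgroup of SL(2,ℂ) generated by X and W is discrete, and the group homomorphism from the free group on two generators to SL(2,ℂ) sending the two generators to X and W respectively is injective. -/

import Mathlib

open Matrix Complex

noncomputable def X : Matrix.SpecialLinearGroup (Fin 2) ℂ :=
  ⟨!![1, 1; 0, 1], by simp [Matrix.det_fin_two_of]⟩

noncomputable def Y (μ : ℂ) : Matrix.SpecialLinearGroup (Fin 2) ℂ :=
  ⟨!![1, 0; μ, 1], by simp [Matrix.det_fin_two_of]⟩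

noncomputable instance : TopologicalSpace (Matrix.SpecialLinearGroup (Fin 2) ℂ) :=
  TopologicalSpace.induced ((↑) : Matrix.SpecialLinearGroup (Fin 2) ℂ → Matrix (Fin 2) (Fin 2) ℂ)
    inferInstance

namespace DF

abbrev SL2 := Matrix.SpecialLinearGroup (Fin 2) ℂ

noncomputable def sg (b : Bool) : ℂ := cond b 1 (-1)

lemma norm_sg (b : Bool) : ‖sg b‖ = 1 := by cases b <;> simp [sg]

lemma sqExpand (z w : ℂ) :
    ‖z + w‖ ^ 2 = ‖z‖ ^ 2 + 2 * (z * (starRingEnd ℂ) w).re + ‖w‖ ^ 2 := by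
  simp only [Complex.sq_norm]
  rw [Complex.normSq_add]; ring

lemma absRe (z w : ℂ) : |(z * (starRingEnd ℂ) w).re| ≤ ‖z‖ * ‖w‖ := by
  calc |(z * (starRingEnd ℂ) w).re| ≤ ‖z * (starRingEnd ℂ) w‖ :=
        Complex.abs_re_le_norm _
    _ = ‖z‖ * ‖w‖ := by rw [norm_mul, RCLike.norm_conj]

lemma le_of_sq_le (a b : ℝ) (hb : 0 ≤ b) (h : a ^ 2 ≤ b ^ 2) : a ≤ b := by nlinarith

lemma mulConjRe (w : ℂ) : (w * (starRingEnd ℂ) w).re = ‖w‖ ^ 2 := by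
  rw [Complex.mul_conj]
  simp [Complex.sq_norm]

lemma norm_add_ge (z w : ℂ) : ‖w‖ - ‖z‖ ≤ ‖z + w‖ := by
  have h : ‖w‖ ≤ ‖z + w‖ + ‖z‖ := by
    calc ‖w‖ = ‖(z + w) - z‖ := by rw [add_sub_cancel_left]
      _ ≤ ‖z + w‖ + ‖z‖ := norm_sub_le _ _
  linarith

/-- transition applying X^{±1} on the left -/
lemma stepX (b : Bool) (p q : ℂ) (h2 : 2 ≤ ‖q‖)
    (hcase : (‖q‖ / 2 ≤ ‖p‖ ∧ 0 ≤ (p * (starRingEnd ℂ) (sg b * q)).re) ∨ 2 * ‖p‖ ≤ ‖q‖) :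
    2 ≤ ‖q‖ ∧ ‖q‖ / 2 ≤ ‖p + sg b * q‖ ∧
      0 ≤ ((p + sg b * q) * (starRingEnd ℂ) (sg b * q)).re := by
  set w := sg b * q with hwdef
  have hw : ‖w‖ = ‖q‖ := by rw [hwdef, norm_mul, norm_sg, one_mul]
  have hexp : ((p + w) * (starRingEnd ℂ) w).re
      = (p * (starRingEnd ℂ) w).re + ‖w‖ ^ 2 := by
    rw [add_mul, Complex.add_re, mulConjRe]
  have habs := absRe p w
  refine ⟨h2, ?_, ?_⟩
  · rcases hcase with ⟨hlow, hal⟩ | hsm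
    · have hsq : (‖q‖ / 2) ^ 2 ≤ ‖p + w‖ ^ 2 := by
        rw [sqExpand]
        nlinarith [norm_nonneg p, norm_nonneg (p + w)]
      exact le_of_sq_le _ _ (norm_nonneg _) hsq
    · have := norm_add_ge p w
      rw [hw] at this
      linarith
  · rw [hexp, hw]
    rcases hcase with ⟨hlow, hal⟩ | hsm
    · nlinarith [norm_nonneg q]
    · rw [hw] at habs
      have : -(‖p‖ * ‖q‖) ≤ (p * (starRingEnd ℂ) w).re := neg_le_of_abs_le habs
      nlinarith [norm_nonneg q]

/-- transition applying Y^{±1} on the left -/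
lemma stepY (μ : ℂ) (hμ : 4 ≤ ‖μ‖) (b : Bool) (p q : ℂ) (h2 : 2 ≤ ‖q‖)
    (hcase : (2 * ‖p‖ ≤ ‖q‖ ∧ 0 ≤ (q * (starRingEnd ℂ) (sg b * μ * p)).re) ∨ ‖q‖ / 2 ≤ ‖p‖) :
    2 ≤ ‖sg b * μ * p + q‖ ∧ 2 * ‖p‖ ≤ ‖sg b * μ * p + q‖ ∧
      0 ≤ ((sg b * μ * p + q) * (starRingEnd ℂ) (sg b * μ * p)).re := by
  set w := sg b * μ * p with hwdef
  have hw : ‖w‖ = ‖μ‖ * ‖p‖ := by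
    rw [hwdef, norm_mul, norm_mul, norm_sg, one_mul]
  have hexp : ((w + q) * (starRingEnd ℂ) w).re
      = ‖w‖ ^ 2 + (q * (starRingEnd ℂ) w).re := by
    rw [add_mul, Complex.add_re, mulConjRe]
  have habs := absRe q w
  have hp0 : 0 ≤ ‖p‖ := norm_nonneg p
  have hq0 : 0 ≤ ‖q‖ := norm_nonneg q
  rcases hcase with ⟨hlow, hal⟩ | hbig
  · -- BB case : ‖w+q‖ ≥ ‖q‖
    have hsq : ‖q‖ ^ 2 ≤ ‖w + q‖ ^ 2 := by
      have : ‖w + q‖ ^ 2 = ‖q‖ ^ 2 + 2 * (q * (starRingEnd ℂ) w).re + ‖w‖ ^ 2 := by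
        rw [add_comm w q, sqExpand]
      nlinarith [norm_nonneg w]
    have hge : ‖q‖ ≤ ‖w + q‖ := le_of_sq_le _ _ (norm_nonneg _) hsq
    refine ⟨by linarith, by linarith, ?_⟩
    rw [hexp]
    nlinarith [norm_nonneg w]
  · -- AB case : ‖q‖ ≤ 2‖p‖, ‖p‖ ≥ 1
    have hp1 : 1 ≤ ‖p‖ := by linarith
    have hge : ‖μ‖ * ‖p‖ - ‖q‖ ≤ ‖w + q‖ := by
      have := norm_add_ge q w
      rw [add_comm q w] at this
      rw [hw] at this
      linarith
    have h2p : 2 * ‖p‖ ≤ ‖w + q‖ := by nlinarith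
    refine ⟨by nlinarith, h2p, ?_⟩
    rw [hexp, hw]
    have hneg : -(‖q‖ * (‖μ‖ * ‖p‖)) ≤ (q * (starRingEnd ℂ) w).re := by
      rw [hw] at habs
      exact neg_le_of_abs_le habs
    have hmp0 : (0:ℝ) ≤ ‖μ‖ * ‖p‖ := mul_nonneg (by linarith) hp0
    have k1 : ‖q‖ * (‖μ‖ * ‖p‖) ≤ (2 * ‖p‖) * (‖μ‖ * ‖p‖) :=
      mul_le_mul_of_nonneg_right (by linarith) hmp0
    have k2 : (2 * ‖p‖) * (‖μ‖ * ‖p‖) ≤ (‖μ‖ * ‖p‖) * (‖μ‖ * ‖p‖) :=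
      mul_le_mul_of_nonneg_right (by nlinarith) hmp0
    nlinarith


/-- no-cancellation relation for reduced words -/
def Rel (a c : Fin 2 × Bool) : Prop := ¬(a.1 = c.1 ∧ a.2 = !c.2)

lemma chain_of_reduce : ∀ L : List (Fin 2 × Bool), FreeGroup.reduce L = L → L.Chain' Rel := by
  intro L
  induction L with
  | nil => intro _; exact List.isChain_nil
  | cons a t ih =>
    intro h
    rw [FreeGroup.reduce.cons] at h
    cases hr : FreeGroup.reduce t with
    | nil =>
      rw [hr] at h
      simp only [List.cons.injEq] at h
      rcases h with ⟨-, ht⟩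
      subst ht
      exact List.isChain_singleton _
    | cons hd tl =>
      rw [hr] at h
      by_cases hc : a.1 = hd.1 ∧ a.2 = !hd.2
      · simp only [hc, and_self, if_true] at h
        exfalso
        have hlen : (FreeGroup.reduce t).length ≤ t.length :=
          FreeGroup.Red.length_le (FreeGroup.reduce.red)
        rw [hr] at hlen
        have := congrArg List.length h
        simp at this hlen
        omega
      · simp only [hc, if_false] at h
        have ht : t = hd :: tl := by
          simpa using h.symm
        subst ht
        rw [List.Chain', List.isChain_cons_cons]
        exact ⟨hc, ih hr⟩


noncomputable def gen (μ : ℂ) (x : Fin 2 × Bool) : SL2 :=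
  cond x.2 (![X, Y μ] x.1) (![X, Y μ] x.1)⁻¹

lemma Xinv : (X⁻¹ : SL2) = ⟨!![1, -1; 0, 1], by simp [Matrix.det_fin_two_of]⟩ := by
  apply inv_eq_of_mul_eq_one_right
  apply Subtype.ext
  show (!![1, 1; 0, 1] : Matrix (Fin 2) (Fin 2) ℂ) * !![1, -1; 0, 1] = _
  rw [Matrix.mul_fin_two, Matrix.SpecialLinearGroup.coe_one, Matrix.one_fin_two]
  norm_num

lemma Yinv (μ : ℂ) : ((Y μ)⁻¹ : SL2) = ⟨!![1, 0; -μ, 1], by simp [Matrix.det_fin_two_of]⟩ := by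
  apply inv_eq_of_mul_eq_one_right
  apply Subtype.ext
  show (!![1, 0; μ, 1] : Matrix (Fin 2) (Fin 2) ℂ) * !![1, 0; -μ, 1] = _
  rw [Matrix.mul_fin_two, Matrix.SpecialLinearGroup.coe_one, Matrix.one_fin_two]
  norm_num

lemma genX (μ : ℂ) (b : Bool) :
    ((gen μ (0, b) : SL2) : Matrix (Fin 2) (Fin 2) ℂ) = !![1, sg b; 0, 1] := by
  cases b
  · show ((X⁻¹ : SL2) : Matrix (Fin 2) (Fin 2) ℂ) = _
    rw [Xinv]
    simp [sg]
  · show ((X : SL2) : Matrix (Fin 2) (Fin 2) ℂ) = _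
    simp [X, sg]

lemma genY (μ : ℂ) (b : Bool) :
    ((gen μ (1, b) : SL2) : Matrix (Fin 2) (Fin 2) ℂ) = !![1, 0; sg b * μ, 1] := by
  cases b
  · show (((Y μ)⁻¹ : SL2) : Matrix (Fin 2) (Fin 2) ℂ) = _
    rw [Yinv]
    simp [sg]
  · show ((Y μ : SL2) : Matrix (Fin 2) (Fin 2) ℂ) = _
    simp [Y, sg]


noncomputable def P (μ : ℂ) (L : List (Fin 2 × Bool)) : SL2 := (L.map (gen μ)).prod

lemma P_cons (μ : ℂ) (a : Fin 2 × Bool) (t : List (Fin 2 × Bool)) :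
    ((P μ (a :: t) : SL2) : Matrix (Fin 2) (Fin 2) ℂ)
      = ((gen μ a : SL2) : Matrix (Fin 2) (Fin 2) ℂ) * ((P μ t : SL2) : Matrix (Fin 2) (Fin 2) ℂ) := by
  rw [P, P, List.map_cons, List.prod_cons, Matrix.SpecialLinearGroup.coe_mul]

/-- the ping-pong state invariant, attached to the leftmost letter of the word -/
def Stt (μ : ℂ) (i : Fin 2) (b : Bool) (p q : ℂ) : Prop :=
  if i = 0 then
    2 ≤ ‖q‖ ∧ ‖q‖ / 2 ≤ ‖p‖ ∧ 0 ≤ (p * (starRingEnd ℂ) (sg b * q)).re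
  else
    2 ≤ ‖q‖ ∧ 2 * ‖p‖ ≤ ‖q‖ ∧ 0 ≤ (q * (starRingEnd ℂ) (sg b * μ * p)).re

lemma Stt0 (μ : ℂ) (b : Bool) (p q : ℂ) : Stt μ 0 b p q ↔
    (2 ≤ ‖q‖ ∧ ‖q‖ / 2 ≤ ‖p‖ ∧ 0 ≤ (p * (starRingEnd ℂ) (sg b * q)).re) := by
  rw [Stt, if_pos rfl]

lemma Stt1 (μ : ℂ) (b : Bool) (p q : ℂ) : Stt μ 1 b p q ↔
    (2 ≤ ‖q‖ ∧ 2 * ‖p‖ ≤ ‖q‖ ∧ 0 ≤ (q * (starRingEnd ℂ) (sg b * μ * p)).re) := by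
  rw [Stt, if_neg (by decide)]

lemma Stt_q {μ : ℂ} {i : Fin 2} {b : Bool} {p q : ℂ} (h : Stt μ i b p q) : 2 ≤ ‖q‖ := by
  unfold Stt at h
  split_ifs at h <;> exact h.1

lemma mainInd (μ : ℂ) (hμ : 4 ≤ ‖μ‖) :
    ∀ L : List (Fin 2 × Bool), L.Chain' Rel → ∀ (h : L ≠ []), (L.getLast h).1 = 1 →
      Stt μ (L.head h).1 (L.head h).2 (((P μ L : SL2) : Matrix (Fin 2) (Fin 2) ℂ) 0 0)
        (((P μ L : SL2) : Matrix (Fin 2) (Fin 2) ℂ) 1 0) := by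
  intro L
  induction L with
  | nil => intro _ h; exact absurd rfl h
  | cons a t ih =>
    intro hch h hlast
    obtain ⟨i, b⟩ := a
    cases t with
    | nil =>
      -- base case : single letter, necessarily a Y letter
      simp only [List.getLast_singleton] at hlast
      have hi : i = 0 ∨ i = 1 := by fin_cases i <;> [left; right] <;> rfl
      rcases hi with rfl | rfl
      · exact absurd hlast (by decide)
      · have hPm : ((P μ [((1 : Fin 2), b)] : SL2) : Matrix (Fin 2) (Fin 2) ℂ)
            = !![1, 0; sg b * μ, 1] := by
          rw [P, List.map_cons, List.map_nil, List.prod_cons, List.prod_nil, mul_one]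
          exact genY μ b
        rw [List.head_cons, hPm]
        show Stt μ 1 b (!![1, 0; sg b * μ, 1] 0 0) (!![1, 0; sg b * μ, 1] 1 0)
        have h00 : (!![1, 0; sg b * μ, 1] : Matrix (Fin 2) (Fin 2) ℂ) 0 0 = 1 := by simp
        have h10 : (!![1, 0; sg b * μ, 1] : Matrix (Fin 2) (Fin 2) ℂ) 1 0 = sg b * μ := by simp
        rw [h00, h10, Stt1]
        have hn : ‖sg b * μ‖ = ‖μ‖ := by rw [norm_mul, norm_sg, one_mul]
        refine ⟨by rw [hn]; linarith, by rw [hn, norm_one]; linarith, ?_⟩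
        simp only [mul_one]
        rw [mulConjRe]
        positivity
    | cons c t' =>
      rw [List.Chain', List.isChain_cons_cons] at hch
      obtain ⟨hrel, hch'⟩ := hch
      have hne : c :: t' ≠ [] := by simp
      have hlast' : ((c :: t').getLast hne).1 = 1 := by
        rwa [List.getLast_cons hne] at hlast
      obtain ⟨j, b'⟩ := c
      have ihs := ih hch' hne hlast'
      rw [List.head_cons] at ihs
      set pt := ((P μ ((j, b') :: t') : SL2) : Matrix (Fin 2) (Fin 2) ℂ) 0 0 with hpt
      set qt := ((P μ ((j, b') :: t') : SL2) : Matrix (Fin 2) (Fin 2) ℂ) 1 0 with hqt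
      have h2 : 2 ≤ ‖qt‖ := Stt_q ihs
      have hi : i = 0 ∨ i = 1 := by fin_cases i <;> [left; right] <;> rfl
      rcases hi with rfl | rfl
      · -- X letter
        have hPm := P_cons μ ((0 : Fin 2), b) ((j, b') :: t')
        rw [genX] at hPm
        have h00 : ((P μ (((0:Fin 2), b) :: ((j, b') :: t')) : SL2) : Matrix (Fin 2) (Fin 2) ℂ) 0 0
            = pt + sg b * qt := by
          rw [hPm, Matrix.mul_apply, Fin.sum_univ_two]
          simp [hpt, hqt]
        have h10 : ((P μ (((0:Fin 2), b) :: ((j, b') :: t')) : SL2) : Matrix (Fin 2) (Fin 2) ℂ) 1 0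
            = qt := by
          rw [hPm, Matrix.mul_apply, Fin.sum_univ_two]
          simp [hqt]
        rw [List.head_cons] at *
        show Stt μ 0 b _ _
        rw [h00, h10, Stt0]
        apply stepX b pt qt h2
        have hj : j = 0 ∨ j = 1 := by fin_cases j <;> [left; right] <;> rfl
        rcases hj with rfl | rfl
        · -- previous letter also X : same sign
          have hb : b = b' := by
            unfold Rel at hrel
            simp only at hrel
            cases b <;> cases b' <;> simp_all
          subst hb
          rw [Stt0] at ihs
          exact Or.inl ⟨ihs.2.1, ihs.2.2⟩
        · rw [Stt1] at ihs
          exact Or.inr ihs.2.1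
      · -- Y letter
        have hPm := P_cons μ ((1 : Fin 2), b) ((j, b') :: t')
        rw [genY] at hPm
        have h00 : ((P μ (((1:Fin 2), b) :: ((j, b') :: t')) : SL2) : Matrix (Fin 2) (Fin 2) ℂ) 0 0
            = pt := by
          rw [hPm, Matrix.mul_apply, Fin.sum_univ_two]
          simp [hpt]
        have h10 : ((P μ (((1:Fin 2), b) :: ((j, b') :: t')) : SL2) : Matrix (Fin 2) (Fin 2) ℂ) 1 0
            = sg b * μ * pt + qt := by
          rw [hPm, Matrix.mul_apply, Fin.sum_univ_two]
          simp [hpt, hqt]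
        rw [List.head_cons] at *
        show Stt μ 1 b _ _
        rw [h00, h10, Stt1]
        have hstep : _ := stepY μ hμ b pt qt h2 ?_
        · exact ⟨hstep.1, hstep.2.1, hstep.2.2⟩
        have hj : j = 0 ∨ j = 1 := by fin_cases j <;> [left; right] <;> rfl
        rcases hj with rfl | rfl
        · rw [Stt0] at ihs
          exact Or.inr ihs.2.1
        · have hb : b = b' := by
            unfold Rel at hrel
            simp only at hrel
            cases b <;> cases b' <;> simp_all
          subst hb
          rw [Stt1] at ihs
          exact Or.inl ⟨ihs.2.1, ihs.2.2⟩

lemma upperTri (μ : ℂ) : ∀ L : List (Fin 2 × Bool), (∀ x ∈ L, x.1 = (0 : Fin 2)) →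
    ∃ s : ℂ, ((P μ L : SL2) : Matrix (Fin 2) (Fin 2) ℂ) = !![1, s; 0, 1] := by
  intro L
  induction L with
  | nil =>
    intro _
    refine ⟨0, ?_⟩
    rw [P, List.map_nil, List.prod_nil, Matrix.SpecialLinearGroup.coe_one, Matrix.one_fin_two]
  | cons a t ih =>
    intro hall
    obtain ⟨s, hs⟩ := ih (fun x hx => hall x (List.mem_cons_of_mem _ hx))
    have ha : a.1 = 0 := hall a (List.mem_cons_self)
    obtain ⟨i, b⟩ := a
    have hi : i = 0 := ha
    subst hi
    refine ⟨s + sg b, ?_⟩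
    rw [P_cons, genX, hs, Matrix.mul_fin_two]
    norm_num

lemma Xrun (μ : ℂ) : ∀ (t : List (Fin 2 × Bool)) (b : Bool),
    List.Chain' Rel (((0 : Fin 2), b) :: t) → (∀ x ∈ t, x.1 = (0 : Fin 2)) →
    ((P μ (((0 : Fin 2), b) :: t) : SL2) : Matrix (Fin 2) (Fin 2) ℂ)
      = !![1, sg b * (t.length + 1); 0, 1] := by
  intro t
  induction t with
  | nil =>
    intro b _ _
    rw [P, List.map_cons, List.map_nil, List.prod_cons, List.prod_nil, mul_one, genX]
    norm_num
  | cons c t' ih =>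
    intro b hch hall
    have hc1 : c.1 = 0 := hall c (List.mem_cons_self)
    obtain ⟨j, b'⟩ := c
    have hj : j = 0 := hc1
    subst hj
    rw [List.Chain', List.isChain_cons_cons] at hch
    obtain ⟨hrel, hch'⟩ := hch
    have hb : b = b' := by
      unfold Rel at hrel
      simp only at hrel
      cases b <;> cases b' <;> simp_all
    subst hb
    rw [P_cons, genX, ih b hch' (fun x hx => hall x (List.mem_cons_of_mem _ hx)),
      Matrix.mul_fin_two]
    norm_num
    ring_nf

def prX : Fin 2 × Bool → Bool := fun x => x.1 == 0

lemma key (μ : ℂ) (hμ : 4 ≤ ‖μ‖) (w : FreeGroup (Fin 2)) (hw : w ≠ 1) :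
    ∃ i j, 1 ≤ ‖((FreeGroup.lift ![X, Y μ] w : SL2) : Matrix (Fin 2) (Fin 2) ℂ) i j
      - (1 : Matrix (Fin 2) (Fin 2) ℂ) i j‖ := by
  have hL : w.toWord ≠ [] := by
    rw [Ne, FreeGroup.toWord_eq_nil_iff]; exact hw
  have hlift : FreeGroup.lift ![X, Y μ] w = P μ w.toWord := by
    conv_lhs => rw [← FreeGroup.mk_toWord (x := w)]
    rw [FreeGroup.lift_mk]
    rfl
  have hch : w.toWord.Chain' Rel := chain_of_reduce _ (FreeGroup.reduce_toWord w)
  set L := w.toWord with hLdef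
  have hsplit : L = (L.reverse.dropWhile prX).reverse ++ (L.reverse.takeWhile prX).reverse := by
    conv_lhs => rw [← List.reverse_reverse L,
      ← List.takeWhile_append_dropWhile (p := prX) (l := L.reverse)]
    rw [List.reverse_append]
  rw [hlift]
  by_cases hD : L.reverse.dropWhile prX = []
  · -- the word is a power of X
    have hallL : ∀ x ∈ L, x.1 = (0 : Fin 2) := by
      intro x hx
      have hx' : x ∈ L.reverse := List.mem_reverse.mpr hx
      rw [← List.takeWhile_append_dropWhile (p := prX) (l := L.reverse), hD,
        List.append_nil] at hx'
      have := List.mem_takeWhile_imp hx'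
      simpa [prX] using this
    rcases hLc : L with _ | ⟨a, t⟩
    · exact absurd hLc hL
    obtain ⟨i, b⟩ := a
    have hi : i = 0 := hallL (i, b) (by rw [hLc]; exact List.mem_cons_self)
    subst hi
    rw [hLc] at hch hallL
    have hXr := Xrun μ t b hch (fun x hx => hallL x (List.mem_cons_of_mem _ hx))
    refine ⟨0, 1, ?_⟩
    rw [hXr]
    have he : (!![1, sg b * (t.length + 1); 0, 1] : Matrix (Fin 2) (Fin 2) ℂ) 0 1
        = sg b * (t.length + 1) := by simp
    have h1 : (1 : Matrix (Fin 2) (Fin 2) ℂ) 0 1 = 0 := by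
      rw [Matrix.one_fin_two]; simp
    rw [he, h1, sub_zero, norm_mul, norm_sg, one_mul]
    have hc : ((t.length : ℂ) + 1) = ((t.length + 1 : ℕ) : ℂ) := by push_cast; ring
    rw [hc, Complex.norm_natCast]
    exact_mod_cast Nat.one_le_iff_ne_zero.mpr (Nat.succ_ne_zero _)
  · -- the word ends (on the right) with a Y letter after stripping X's
    set L' := (L.reverse.dropWhile prX).reverse with hL'def
    have hL' : L' ≠ [] := by
      rw [hL'def, Ne, List.reverse_eq_nil_iff]; exact hD
    have hpref : L' <+: L := ⟨(L.reverse.takeWhile prX).reverse, hsplit.symm⟩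
    have hch' : L'.Chain' Rel := List.IsChain.prefix hch hpref
    have hlastD : (L'.getLast hL').1 = 1 := by
      have hgl : L'.getLast hL' = (L.reverse.dropWhile prX).head hD := by
        simp only [hL'def, List.getLast_reverse]
      have hgl1 := congrArg Prod.fst hgl
      rw [hgl1]
      have h2 := List.head_dropWhile_not prX hD
      have h3 : ¬ ((L.reverse.dropWhile prX).head hD).1 = 0 := by
        intro hcon
        simp only [prX, hcon] at h2
        simp at h2
      omega
    have hmain := mainInd μ hμ L' hch' hL' hlastD
    have h2q := Stt_q hmain
    have hTall : ∀ x ∈ (L.reverse.takeWhile prX).reverse, x.1 = (0 : Fin 2) := by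
      intro x hx
      have := List.mem_takeWhile_imp (List.mem_reverse.mp hx)
      simpa [prX] using this
    obtain ⟨s, hs⟩ := upperTri μ _ hTall
    have hPapp : ((P μ L : SL2) : Matrix (Fin 2) (Fin 2) ℂ)
        = ((P μ L' : SL2) : Matrix (Fin 2) (Fin 2) ℂ)
          * ((P μ ((L.reverse.takeWhile prX).reverse) : SL2) : Matrix (Fin 2) (Fin 2) ℂ) := by
      conv_lhs => rw [hsplit]
      rw [← Matrix.SpecialLinearGroup.coe_mul]
      congr 1
      rw [P, P, P, List.map_append, List.prod_append]
    have hentry : ((P μ L : SL2) : Matrix (Fin 2) (Fin 2) ℂ) 1 0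
        = ((P μ L' : SL2) : Matrix (Fin 2) (Fin 2) ℂ) 1 0 := by
      rw [hPapp, hs, Matrix.eta_fin_two ((P μ L' : SL2) : Matrix (Fin 2) (Fin 2) ℂ),
        Matrix.mul_fin_two]
      simp
    refine ⟨1, 0, ?_⟩
    have h1 : (1 : Matrix (Fin 2) (Fin 2) ℂ) 1 0 = 0 := by
      rw [Matrix.one_fin_two]; simp
    rw [hentry, h1, sub_zero]
    linarith

lemma lift_ne_one (μ : ℂ) (hμ : 4 ≤ ‖μ‖) (w : FreeGroup (Fin 2)) (hw : w ≠ 1) :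
    FreeGroup.lift ![X, Y μ] w ≠ 1 := by
  intro hcon
  obtain ⟨i, j, hij⟩ := key μ hμ w hw
  rw [hcon] at hij
  rw [Matrix.SpecialLinearGroup.coe_one, sub_self, norm_zero] at hij
  linarith

/-- the substitution x ↦ x, y ↦ yx as an endomorphism of the free group -/
noncomputable def ψ : FreeGroup (Fin 2) →* FreeGroup (Fin 2) :=
  FreeGroup.lift ![FreeGroup.of 0, FreeGroup.of 1 * FreeGroup.of 0]

noncomputable def σ : FreeGroup (Fin 2) →* FreeGroup (Fin 2) :=
  FreeGroup.lift ![FreeGroup.of 0, FreeGroup.of 1 * (FreeGroup.of 0)⁻¹]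

lemma ψ_inj : Function.Injective ψ := by
  have hσψ : σ.comp ψ = MonoidHom.id _ := by
    apply FreeGroup.ext_hom
    intro a
    fin_cases a
    · simp [ψ, σ]
    · simp [ψ, σ, mul_assoc]
  intro x y hxy
  have := congrArg σ hxy
  calc x = σ (ψ x) := (DFunLike.congr_fun hσψ x).symm
    _ = σ (ψ y) := this
    _ = y := DFunLike.congr_fun hσψ y

end DF

open DF

/-- If c = a + d − 2 and Re(a + d) ≤ −2 then ⟨X, W⟩ is discrete and free on X and W. -/
theorem discrete_and_free (W : Matrix.SpecialLinearGroup (Fin 2) ℂ)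
    (h : (W : Matrix (Fin 2) (Fin 2) ℂ) 1 0 =
      (W : Matrix (Fin 2) (Fin 2) ℂ) 0 0 + (W : Matrix (Fin 2) (Fin 2) ℂ) 1 1 - 2)
    (hre : ((W : Matrix (Fin 2) (Fin 2) ℂ) 0 0 + (W : Matrix (Fin 2) (Fin 2) ℂ) 1 1).re ≤ -2) :
    DiscreteTopology
        (Subgroup.closure ({X, W} : Set (Matrix.SpecialLinearGroup (Fin 2) ℂ))) ∧
      Function.Injective
        (FreeGroup.lift (![X, W]) : FreeGroup (Fin 2) →* Matrix.SpecialLinearGroup (Fin 2) ℂ) := by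
  set a := (W : Matrix (Fin 2) (Fin 2) ℂ) 0 0 with hadef
  set b := (W : Matrix (Fin 2) (Fin 2) ℂ) 0 1 with hbdef
  set c := (W : Matrix (Fin 2) (Fin 2) ℂ) 1 0 with hcdef
  set d := (W : Matrix (Fin 2) (Fin 2) ℂ) 1 1 with hddef
  have hdet : a * d - b * c = 1 := by
    have := W.2
    rw [Matrix.det_fin_two] at this
    exact this
  have hcre : c.re ≤ -4 := by
    rw [h]
    simp only [Complex.sub_re, Complex.ofReal_re]
    have : (2 : ℂ).re = 2 := by norm_num
    rw [this]
    linarith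
  have hc4 : 4 ≤ ‖c‖ := by
    have h1 : |c.re| ≤ ‖c‖ := Complex.abs_re_le_norm c
    have h2 : 4 ≤ |c.re| := by
      rw [abs_of_nonpos (by linarith)]
      linarith
    linarith
  have hc0 : c ≠ 0 := by
    intro hcon
    rw [hcon] at hcre
    norm_num at hcre
  -- the conjugating parabolic element
  set s : ℂ := (1 - a) / c with hsdef
  set S : SL2 := ⟨!![1, s; 0, 1], by simp [Matrix.det_fin_two_of]⟩ with hSdef
  have hSX : S * X = X * S := by
    apply Subtype.ext
    rw [Matrix.SpecialLinearGroup.coe_mul, Matrix.SpecialLinearGroup.coe_mul]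
    show (!![1, s; 0, 1] : Matrix (Fin 2) (Fin 2) ℂ) * !![1, 1; 0, 1]
      = (!![1, 1; 0, 1] : Matrix (Fin 2) (Fin 2) ℂ) * !![1, s; 0, 1]
    rw [Matrix.mul_fin_two, Matrix.mul_fin_two]
    norm_num [add_comm]
  have hSW : S * W = (Y c * X) * S := by
    apply Subtype.ext
    rw [Matrix.SpecialLinearGroup.coe_mul, Matrix.SpecialLinearGroup.coe_mul,
      Matrix.SpecialLinearGroup.coe_mul]
    have hWm : (W : Matrix (Fin 2) (Fin 2) ℂ) = !![a, b; c, d] := by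
      rw [Matrix.eta_fin_two (W : Matrix (Fin 2) (Fin 2) ℂ)]
    rw [hWm]
    show (!![1, s; 0, 1] : Matrix (Fin 2) (Fin 2) ℂ) * !![a, b; c, d]
      = ((!![1, 0; c, 1] : Matrix (Fin 2) (Fin 2) ℂ) * !![1, 1; 0, 1]) * !![1, s; 0, 1]
    rw [Matrix.mul_fin_two, Matrix.mul_fin_two, Matrix.mul_fin_two]
    have hcadd : c = a + d - 2 := h
    ext i j
    fin_cases i <;> fin_cases j <;> simp <;> rw [hsdef] <;> field_simp <;>
      first
        | linear_combination -hdet - hcadd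
        | linear_combination -hcadd
        | linear_combination
  -- conjugation intertwines the two representations
  have hcomm : (MulAut.conj S).toMonoidHom.comp (FreeGroup.lift ![X, W])
      = (FreeGroup.lift ![X, Y c]).comp ψ := by
    apply FreeGroup.ext_hom
    intro i
    fin_cases i
    · show MulAut.conj S (FreeGroup.lift ![X, W] (FreeGroup.of 0))
        = FreeGroup.lift ![X, Y c] (ψ (FreeGroup.of 0))
      rw [show ψ (FreeGroup.of 0) = FreeGroup.of (0 : Fin 2) from by simp [ψ]]
      rw [FreeGroup.lift_apply_of, FreeGroup.lift_apply_of]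
      show S * X * S⁻¹ = ![X, Y c] 0
      rw [hSX]
      simp
    · show MulAut.conj S (FreeGroup.lift ![X, W] (FreeGroup.of 1))
        = FreeGroup.lift ![X, Y c] (ψ (FreeGroup.of 1))
      rw [show ψ (FreeGroup.of 1) = FreeGroup.of (1 : Fin 2) * FreeGroup.of (0 : Fin 2)
        from by simp [ψ]]
      rw [FreeGroup.lift_apply_of, _root_.map_mul, FreeGroup.lift_apply_of, FreeGroup.lift_apply_of]
      show S * W * S⁻¹ = ![X, Y c] 1 * ![X, Y c] 0
      rw [hSW]
      simp
  have hconj_inj : Function.Injective (MulAut.conj S).toMonoidHom :=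
    (MulAut.conj S).injective
  have hlift_inj : Function.Injective (FreeGroup.lift ![X, Y c]) := by
    rw [injective_iff_map_eq_one]
    intro w hw
    by_contra hne
    exact lift_ne_one c hc4 w hne hw
  have hXW_inj : Function.Injective
      (FreeGroup.lift (![X, W]) : FreeGroup (Fin 2) →* SL2) := by
    have hci : Function.Injective
        ((MulAut.conj S).toMonoidHom.comp (FreeGroup.lift ![X, W])) := by
      rw [hcomm, MonoidHom.coe_comp]
      exact hlift_inj.comp ψ_inj
    rw [MonoidHom.coe_comp] at hci
    exact hci.of_comp
  refine ⟨?_, hXW_inj⟩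
  -- discreteness
  have hrange : Set.range ![X, W] = ({X, W} : Set SL2) := by
    ext g
    simp [Fin.exists_fin_two, or_comm]
  have hΓ : (FreeGroup.lift ![X, W]).range = Subgroup.closure ({X, W} : Set SL2) := by
    rw [FreeGroup.range_lift_eq_closure, hrange]
  rw [discreteTopology_iff_isOpen_singleton]
  intro x
  -- the open set isolating x
  set g : SL2 := (x : SL2) with hgdef
  have hcont : Continuous (fun A : Matrix (Fin 2) (Fin 2) ℂ =>
      ((S * g⁻¹ : SL2) : Matrix (Fin 2) (Fin 2) ℂ) * A * ((S⁻¹ : SL2) : Matrix (Fin 2) (Fin 2) ℂ)) :=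
    (continuous_const.matrix_mul continuous_id).matrix_mul continuous_const
  set U : Set (Matrix (Fin 2) (Fin 2) ℂ) :=
    ⋂ i, ⋂ j, {B : Matrix (Fin 2) (Fin 2) ℂ | ‖B i j - (1 : Matrix (Fin 2) (Fin 2) ℂ) i j‖ < 1}
    with hUdef
  have hUopen : IsOpen U := by
    refine isOpen_iInter_of_finite fun i => isOpen_iInter_of_finite fun j => ?_
    have : Continuous fun B : Matrix (Fin 2) (Fin 2) ℂ =>
        ‖B i j - (1 : Matrix (Fin 2) (Fin 2) ℂ) i j‖ :=
      ((continuous_id.matrix_elem i j).sub continuous_const).norm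
    exact isOpen_lt this continuous_const
  have hVopen : IsOpen ((fun A : Matrix (Fin 2) (Fin 2) ℂ =>
      ((S * g⁻¹ : SL2) : Matrix (Fin 2) (Fin 2) ℂ) * A * ((S⁻¹ : SL2) : Matrix (Fin 2) (Fin 2) ℂ)) ⁻¹' U) :=
    hUopen.preimage hcont
  have hcoe_cont : Continuous (fun y : (Subgroup.closure ({X, W} : Set SL2)) =>
      ((y : SL2) : Matrix (Fin 2) (Fin 2) ℂ)) := by
    exact continuous_induced_dom.comp continuous_subtype_val
  have hopen2 : IsOpen ((fun y : (Subgroup.closure ({X, W} : Set SL2)) =>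
      ((y : SL2) : Matrix (Fin 2) (Fin 2) ℂ)) ⁻¹' ((fun A : Matrix (Fin 2) (Fin 2) ℂ =>
      ((S * g⁻¹ : SL2) : Matrix (Fin 2) (Fin 2) ℂ) * A * ((S⁻¹ : SL2) : Matrix (Fin 2) (Fin 2) ℂ)) ⁻¹' U)) :=
    hVopen.preimage hcoe_cont
  have hseteq : ((fun y : (Subgroup.closure ({X, W} : Set SL2)) =>
      ((y : SL2) : Matrix (Fin 2) (Fin 2) ℂ)) ⁻¹' ((fun A : Matrix (Fin 2) (Fin 2) ℂ =>
      ((S * g⁻¹ : SL2) : Matrix (Fin 2) (Fin 2) ℂ) * A * ((S⁻¹ : SL2) : Matrix (Fin 2) (Fin 2) ℂ)) ⁻¹' U))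
      = {x} := by
    ext y
    simp only [Set.mem_preimage, Set.mem_singleton_iff]
    constructor
    · intro hy
      -- if y ≠ x we get a contradiction from the key entry bound
      by_contra hyx
      have hne1 : g⁻¹ * (y : SL2) ≠ 1 := by
        intro hcon
        apply hyx
        apply Subtype.ext
        have : (y : SL2) = g := by
          have := congrArg (fun z => g * z) hcon
          simpa [← mul_assoc] using this
        rw [this, hgdef]
      have hmem : g⁻¹ * (y : SL2) ∈ (FreeGroup.lift ![X, W]).range := by
        rw [hΓ]
        exact mul_mem (inv_mem x.2) y.2
      obtain ⟨w, hw⟩ := hmem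
      have hwne : w ≠ 1 := by
        intro hcon
        rw [hcon, _root_.map_one] at hw
        exact hne1 hw.symm
      -- transport through the conjugation
      have hN : FreeGroup.lift ![X, Y c] (ψ w) = S * (g⁻¹ * (y : SL2)) * S⁻¹ := by
        have := DFunLike.congr_fun hcomm w
        simp only [MonoidHom.comp_apply, MulEquiv.toMonoidHom_eq_coe,
          MonoidHom.coe_coe] at this
        rw [← this, hw]
        rfl
      obtain ⟨i, j, hij⟩ := key c hc4 (ψ w) (fun hcon => hwne (ψ_inj (by rwa [_root_.map_one])))
      rw [hN] at hij
      have hmat : ((S * (g⁻¹ * (y : SL2)) * S⁻¹ : SL2) : Matrix (Fin 2) (Fin 2) ℂ)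
          = ((S * g⁻¹ : SL2) : Matrix (Fin 2) (Fin 2) ℂ) * ((y : SL2) : Matrix (Fin 2) (Fin 2) ℂ)
            * ((S⁻¹ : SL2) : Matrix (Fin 2) (Fin 2) ℂ) := by
        have h1 : S * (g⁻¹ * (y : SL2)) * S⁻¹ = (S * g⁻¹) * (y : SL2) * S⁻¹ := by group
        rw [h1, Matrix.SpecialLinearGroup.coe_mul, Matrix.SpecialLinearGroup.coe_mul]
      rw [hmat] at hij
      have hy' := hy
      rw [hUdef] at hy'
      simp only [Set.mem_iInter, Set.mem_setOf_eq] at hy'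
      have := hy' i j
      linarith
    · intro hy
      have hyx : ((y : SL2) : Matrix (Fin 2) (Fin 2) ℂ) = ((x : SL2) : Matrix (Fin 2) (Fin 2) ℂ) := by
        rw [hy]
      show ((S * g⁻¹ : SL2) : Matrix (Fin 2) (Fin 2) ℂ) * ((y : SL2) : Matrix (Fin 2) (Fin 2) ℂ)
          * ((S⁻¹ : SL2) : Matrix (Fin 2) (Fin 2) ℂ) ∈ U
      rw [hyx]
      have hone : ((S * g⁻¹ : SL2) : Matrix (Fin 2) (Fin 2) ℂ) * ((x : SL2) : Matrix (Fin 2) (Fin 2) ℂ)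
          * ((S⁻¹ : SL2) : Matrix (Fin 2) (Fin 2) ℂ) = (1 : Matrix (Fin 2) (Fin 2) ℂ) := by
        rw [← Matrix.SpecialLinearGroup.coe_mul, ← Matrix.SpecialLinearGroup.coe_mul]
        rw [show S * g⁻¹ * (x : SL2) * S⁻¹ = (1 : SL2) from by rw [hgdef]; group]
        exact Matrix.SpecialLinearGroup.coe_one
      rw [hUdef]
      simp only [Set.mem_iInter, Set.mem_setOf_eq]
      intro i j
      rw [hone]
      simp
  rw [← hseteq]
  exact hopen2
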